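/- Let h : ℕ → ℕ satisfy condition (a), let i ≥ 1 be an integer, let p ∈ ℕ, and let q ∈ ℕ be a multiple of 2^(i-1). If h(2^i · ⌊p/2^i⌋) < q + 2^(i-1), then h(2^(i-1) · ⌊p/2^(i-1)⌋) < q + 2^(i-1). -/

import Mathlib

/-- Condition (a): if `⌊z/2^i⌋ = ⌊z'/2^i⌋` for some `i ≥ 1`,
then `⌊h(z)/2^(i-1)⌋ = ⌊h(z')/2^(i-1)⌋`. -/
def CondA (h : ℕ → ℕ) : Prop :=
  ∀ z z' i : ℕ, 1 ≤ i → z / 2 ^ i = z' / 2 ^ i →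
    h z / 2 ^ (i - 1) = h z' / 2 ^ (i - 1)

theorem stmt_4 (h : ℕ → ℕ) (hA : CondA h) (i : ℕ) (hi : 1 ≤ i) (p q : ℕ)
    (hq : 2 ^ (i - 1) ∣ q) (hlt : h (2 ^ i * (p / 2 ^ i)) < q + 2 ^ (i - 1)) :
    h (2 ^ (i - 1) * (p / 2 ^ (i - 1))) < q + 2 ^ (i - 1) := by
  obtain ⟨k, rfl⟩ := hq
  have hpow : (0:ℕ) < 2 ^ (i - 1) := Nat.pow_pos (by norm_num)
  have hi2 : 2 ^ i = 2 ^ (i - 1) * 2 := by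
    rw [← pow_succ]
    congr 1
    omega
  have hdiv : (2 ^ i * (p / 2 ^ i)) / 2 ^ i
      = (2 ^ (i - 1) * (p / 2 ^ (i - 1))) / 2 ^ i := by
    rw [Nat.mul_div_cancel_left _ (Nat.pow_pos (by norm_num))]
    rw [hi2, Nat.mul_div_mul_left _ _ hpow, Nat.div_div_eq_div_mul]
  have heq := hA _ _ i hi hdiv
  have key : ∀ m : ℕ, (h m < 2 ^ (i - 1) * k + 2 ^ (i - 1)) ↔
      h m / 2 ^ (i - 1) < k + 1 := by
    intro m
    rw [Nat.div_lt_iff_lt_mul hpow]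
    constructor <;> intro H <;> nlinarith
  rw [key] at hlt ⊢
  rw [← heq]
  exact hlt
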